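/- Let σ ∈ [0, 1/2) and let a, b, u ∈ ℝ^d satisfy ‖a‖ ≤ 1, ‖b‖ ≤ 1, ‖u‖ ≤ 1. Let X be the random vector in ℝ^d taking the value u + ((1−σ)a − σb)/(1−2σ) with probability 1 − σ and the value u + ((1−σ)b − σa)/(1−2σ) with probability σ. Then E[X] = u + a and E[‖X‖²] ≤ 3 + 1/(1 − 2σ)². (This shows the random-classification-noise gradient oracle satisfies the noise model with noise level Γ² = 3 + 1/(1−2σ)².) -/

import Mathlib

/-- The random-classification-noise gradient oracle satisfies the noise model
with `Γ² = 3 + 1/(1-2σ)²`: the two-point random vector `X` taking value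
`u + ((1-σ)a - σb)/(1-2σ)` with probability `1 - σ` and
`u + ((1-σ)b - σa)/(1-2σ)` with probability `σ` has mean `u + a` and second
moment at most `3 + 1/(1-2σ)²`. -/
theorem statement_4 (d : ℕ) (σ : ℝ) (hσ : σ ∈ Set.Ico (0 : ℝ) (1 / 2))
    (a b u : EuclideanSpace ℝ (Fin d))
    (ha : ‖a‖ ≤ 1) (hb : ‖b‖ ≤ 1) (hu : ‖u‖ ≤ 1) :
    (1 - σ) • (u + (1 - 2 * σ)⁻¹ • ((1 - σ) • a - σ • b)) +
        σ • (u + (1 - 2 * σ)⁻¹ • ((1 - σ) • b - σ • a)) = u + a ∧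
    (1 - σ) * ‖u + (1 - 2 * σ)⁻¹ • ((1 - σ) • a - σ • b)‖ ^ 2 +
        σ * ‖u + (1 - 2 * σ)⁻¹ • ((1 - σ) • b - σ • a)‖ ^ 2 ≤
      3 + 1 / (1 - 2 * σ) ^ 2 := by
  obtain ⟨hσ0, hσ2⟩ := hσ
  have hpos : (0 : ℝ) < 1 - 2 * σ := by linarith
  have hne : (1 - 2 * σ) ≠ 0 := ne_of_gt hpos
  set c : ℝ := (1 - 2 * σ)⁻¹ with hc
  have hcpos : 0 < c := inv_pos.mpr hpos
  set v₁ : EuclideanSpace ℝ (Fin d) := c • ((1 - σ) • a - σ • b) with hv₁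
  set v₂ : EuclideanSpace ℝ (Fin d) := c • ((1 - σ) • b - σ • a) with hv₂
  have hmean : (1 - σ) • v₁ + σ • v₂ = a := by
    rw [hv₁, hv₂]
    match_scalars <;> field_simp <;> nlinarith [mul_inv_cancel₀ hne, inv_mul_cancel₀ hne]
  constructor
  · have : (1 - σ) • (u + v₁) + σ • (u + v₂) =
        ((1 - σ) + σ) • u + ((1 - σ) • v₁ + σ • v₂) := by
      module
    rw [this, hmean]
    norm_num
  · have hnv : ∀ x y : EuclideanSpace ℝ (Fin d), ‖x‖ ≤ 1 → ‖y‖ ≤ 1 →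
        ‖c • ((1 - σ) • x - σ • y)‖ ≤ c := by
      intro x y hx hy
      rw [norm_smul, Real.norm_eq_abs, abs_of_pos hcpos]
      have h1 : ‖(1 - σ) • x - σ • y‖ ≤ ‖(1 - σ) • x‖ + ‖σ • y‖ := norm_sub_le _ _
      have h2 : ‖(1 - σ) • x‖ ≤ 1 - σ := by
        rw [norm_smul, Real.norm_eq_abs, abs_of_nonneg (by linarith)]; nlinarith
      have h3 : ‖σ • y‖ ≤ σ := by
        rw [norm_smul, Real.norm_eq_abs, abs_of_nonneg hσ0]; nlinarith
      calc c * ‖(1 - σ) • x - σ • y‖ ≤ c * 1 := by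
            apply mul_le_mul_of_nonneg_left _ hcpos.le; linarith
        _ = c := mul_one c
    have hn1 : ‖v₁‖ ≤ c := hnv a b ha hb
    have hn2 : ‖v₂‖ ≤ c := hnv b a hb ha
    have e1 : ‖u + v₁‖ ^ 2 = ‖u‖ ^ 2 + 2 * inner ℝ u v₁ + ‖v₁‖ ^ 2 :=
      norm_add_sq_real u v₁
    have e2 : ‖u + v₂‖ ^ 2 = ‖u‖ ^ 2 + 2 * inner ℝ u v₂ + ‖v₂‖ ^ 2 :=
      norm_add_sq_real u v₂
    have hinner : (1 - σ) * inner ℝ u v₁ + σ * inner ℝ u v₂ = (inner ℝ u a : ℝ) := by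
      rw [← hmean]
      simp only [inner_add_right, real_inner_smul_right]
    have hia : (inner ℝ u a : ℝ) ≤ 1 := by
      calc (inner ℝ u a : ℝ) ≤ ‖u‖ * ‖a‖ := real_inner_le_norm u a
        _ ≤ 1 * 1 := mul_le_mul hu ha (norm_nonneg a) zero_le_one
        _ = 1 := one_mul 1
    have hsq1 : ‖v₁‖ ^ 2 ≤ c ^ 2 := pow_le_pow_left₀ (norm_nonneg v₁) hn1 2
    have hsq2 : ‖v₂‖ ^ 2 ≤ c ^ 2 := pow_le_pow_left₀ (norm_nonneg v₂) hn2 2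
    have hcsq : c ^ 2 = 1 / (1 - 2 * σ) ^ 2 := by
      rw [hc, one_div, ← inv_pow]
    have husq : ‖u‖ ^ 2 ≤ 1 := by
      calc ‖u‖ ^ 2 ≤ 1 ^ 2 := pow_le_pow_left₀ (norm_nonneg u) hu 2
        _ = 1 := one_pow 2
    have hw : (1 - σ) * ‖v₁‖ ^ 2 + σ * ‖v₂‖ ^ 2 ≤ c ^ 2 := by
      have h1 := mul_le_mul_of_nonneg_left hsq1 (by linarith : (0:ℝ) ≤ 1 - σ)
      have h2 := mul_le_mul_of_nonneg_left hsq2 hσ0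
      linarith
    have key : (1 - σ) * ‖u + v₁‖ ^ 2 + σ * ‖u + v₂‖ ^ 2 =
        ‖u‖ ^ 2 + 2 * (inner ℝ u a : ℝ) + ((1 - σ) * ‖v₁‖ ^ 2 + σ * ‖v₂‖ ^ 2) := by
      rw [e1, e2]; linear_combination 2 * hinner
    rw [key, ← hcsq]
    linarith
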